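/- Let L : X → X be linear nonexpansive, b ∈ X, T(x) = Lx + b with Fix T ≠ ∅, and let a = (Id − L)^† b. Then a ∈ (Id − L)^{-1}(b), a = P_{(Fix L)^⊥}(a), and P_{Fix T}(x) = P_{Fix L}(x) + a for all x. -/

import Mathlib

variable {X : Type*} [NormedAddCommGroup X] [InnerProductSpace ℝ X] [CompleteSpace X]

/-- `B` is the Moore–Penrose (pseudo)inverse of `A`, characterized by the four Penrose
conditions. -/
def IsMoorePenroseInverse (A B : X →L[ℝ] X) : Prop :=
  A ∘L B ∘L A = A ∧ B ∘L A ∘L B = B ∧ IsSelfAdjoint (A ∘L B) ∧ IsSelfAdjoint (B ∘L A)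

/-- The fixed-point set `Fix L = {x : L x = x}` of a continuous linear operator,
as a (closed) subspace. -/
noncomputable def fixSpace (L : X →L[ℝ] X) : Submodule ℝ X :=
  LinearMap.ker ((ContinuousLinearMap.id ℝ X - L : X →L[ℝ] X) : X →ₗ[ℝ] X)

instance (L : X →L[ℝ] X) : CompleteSpace (fixSpace L) :=
  (ContinuousLinearMap.isClosed_ker (ContinuousLinearMap.id ℝ X - L)).completeSpace_coe

omit [CompleteSpace X] in
private lemma proj_min (K : Submodule ℝ X) [K.HasOrthogonalProjection] (u v : X)
    (hv : v ∈ K) : ‖u - (Submodule.orthogonalProjectionOnto K u : X)‖ ≤ ‖u - v‖ := by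
  show ‖u - K.starProjection u‖ ≤ _
  rw [Submodule.starProjection_minimal]
  exact ciInf_le ⟨0, fun r ⟨w, hw⟩ => hw ▸ norm_nonneg _⟩ (⟨v, hv⟩ : K)

/-- let `L` be linear nonexpansive, `b ∈ X`, `T x = L x + b` with `Fix T ≠ ∅`, and
`a = (Id − L)^† b`.  Then `(Id − L) a = b`, `a = P_{(Fix L)^⊥} a`, and
`P_{Fix T} x = P_{Fix L} x + a` for all `x` (the latter expressed via the nearest-point property
of the metric projection onto the set `Fix T`). -/
theorem stmt9 (L : X →L[ℝ] X) (hL : ∀ x, ‖L x‖ ≤ ‖x‖) (b : X)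
    (T : X → X) (hT : ∀ x, T x = L x + b)
    (hfix : {x | T x = x}.Nonempty)
    (B : X →L[ℝ] X) (hB : IsMoorePenroseInverse (ContinuousLinearMap.id ℝ X - L) B)
    (a : X) (ha : a = B b) :
    (ContinuousLinearMap.id ℝ X - L) a = b ∧
      a = (Submodule.orthogonalProjectionOnto (fixSpace L)ᗮ a : X) ∧
      ∀ x : X,
        (Submodule.orthogonalProjectionOnto (fixSpace L) x : X) + a ∈ {x | T x = x} ∧
          ∀ w ∈ {x | T x = x},
            ‖x - ((Submodule.orthogonalProjectionOnto (fixSpace L) x : X) + a)‖ ≤ ‖x - w‖ := by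
  set A := ContinuousLinearMap.id ℝ X - L with hA
  obtain ⟨x₀, hx₀⟩ := hfix
  -- A x₀ = b
  have hAx₀ : A x₀ = b := by
    have h := hx₀
    simp only [Set.mem_setOf_eq, hT] at h
    show x₀ - L x₀ = b
    rw [sub_eq_iff_eq_add, add_comm b]; exact h.symm
  -- membership in fixSpace L ↔ A v = 0
  have hmem : ∀ v : X, v ∈ fixSpace L ↔ A v = 0 := fun v => Iff.rfl
  -- A a = b
  have hAa : A a = b := by
    have h1 : A (B (A x₀)) = A x₀ := congrFun (congrArg DFunLike.coe hB.1) x₀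
    rw [ha, ← hAx₀]; exact h1
  -- a ⊥ fixSpace L
  have hsym : ((B ∘L A : X →L[ℝ] X) : X →ₗ[ℝ] X).IsSymmetric := hB.2.2.2.isSymmetric
  have haperp : a ∈ (fixSpace L)ᗮ := by
    intro v hv
    have hv0 : A v = 0 := (hmem v).mp hv
    have h1 : (inner ℝ v a : ℝ) = inner ℝ ((B ∘L A) v) x₀ := by
      rw [ha, ← hAx₀]
      exact (hsym v x₀).symm
    have h2 : (B ∘L A) v = 0 := by
      show B (A v) = 0
      rw [hv0, map_zero]
    rw [h1, h2, inner_zero_left]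
  refine ⟨hAa, (Submodule.starProjection_eq_self_iff.mpr haperp).symm, fun x => ?_⟩
  have hPa : Submodule.orthogonalProjectionOnto (fixSpace L) a = 0 :=
    Submodule.orthogonalProjectionOnto_eq_zero_iff.mpr haperp
  have hPmem : (Submodule.orthogonalProjectionOnto (fixSpace L) x : X) ∈ fixSpace L :=
    (Submodule.orthogonalProjectionOnto (fixSpace L) x).2
  have hfixmem : (Submodule.orthogonalProjectionOnto (fixSpace L) x : X) + a ∈ {x | T x = x} := by
    have hAP : A ((Submodule.orthogonalProjectionOnto (fixSpace L) x : X)) = 0 := (hmem _).mp hPmem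
    have : A ((Submodule.orthogonalProjectionOnto (fixSpace L) x : X) + a) = b := by
      rw [map_add, hAP, hAa, zero_add]
    simp only [Set.mem_setOf_eq, hT]
    have h' : (Submodule.orthogonalProjectionOnto (fixSpace L) x : X) + a
        - L ((Submodule.orthogonalProjectionOnto (fixSpace L) x : X) + a) = b := this
    rw [← h']
    abel
  refine ⟨hfixmem, fun w hw => ?_⟩
  -- w - a ∈ fixSpace L
  have hwa : w - a ∈ fixSpace L := by
    rw [hmem, map_sub, hAa]
    have h := hw
    simp only [Set.mem_setOf_eq, hT] at h
    have hAw : A w = b := by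
      show w - L w = b
      rw [sub_eq_iff_eq_add, add_comm b]; exact h.symm
    rw [hAw, sub_self]
  -- projection of x - a equals projection of x
  have hproj : Submodule.orthogonalProjectionOnto (fixSpace L) (x - a)
      = Submodule.orthogonalProjectionOnto (fixSpace L) x := by
    rw [map_sub, hPa, sub_zero]
  have := proj_min (fixSpace L) (x - a) (w - a) hwa
  rw [hproj] at this
  calc ‖x - ((Submodule.orthogonalProjectionOnto (fixSpace L) x : X) + a)‖
      = ‖x - a - (Submodule.orthogonalProjectionOnto (fixSpace L) x : X)‖ := by congr 1; abel
    _ ≤ ‖x - a - (w - a)‖ := this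
    _ = ‖x - w‖ := by congr 1; abel
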